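/- The diagonal matrix of the permuted product code operator family and its distance: Let F_q be a finite field of characteristic p and γ ∈ F_q^*. For i ≥ 0 define G_i : F_q[X,Y] → F_q[X,Y] by G_i(q)(X,Y) = q(X + i, γ^i·Y) (where X + i means X plus the image of the integer i in F_q). Then: (a) for all a, b ≥ 0, the coefficient of X^aY^b in G_i(X^aY^b) equals γ^{i·b}; (b) if γ has multiplicative order at least k and 1 ≤ w, then for every nonzero u = (u_0,…,u_{w−1}) ∈ F_q^w, the number of pairs (a,b) with a ∈ {0,…,t−1}, b ∈ {0,…,k−1} such that Σ_{i=0}^{w−1} u_i·γ^{i·b} = 0 is at most (w−1)·t. In particular, the matrix Diag(𝓖) ∈ F_q^{w×(tk)} with entry γ^{i·b} in position (i, ak+b) generates a code of minimum distance at least tk − (w−1)t. -/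
import Mathlib


open MvPolynomial

noncomputable section

/-- The permuted product code operator `G_i : q(X,Y) ↦ q(X + i, γ^i·Y)`. -/
def gOp (F : Type) [Field F] (γ : F) (i : ℕ) :
    MvPolynomial (Fin 2) F → MvPolynomial (Fin 2) F :=
  fun p => MvPolynomial.aeval ![X 0 + C ((i : ℕ) : F), C (γ ^ i) * X 1] p

private lemma ppc_lead (F : Type) [Field F] (c : F) (a : ℕ) :
    MvPolynomial.coeff (Finsupp.single 0 a) ((X 0 + C c)^a : MvPolynomial (Fin 2) F) = 1 := by
  induction a with
  | zero => simp
  | succ a ih =>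
    rw [pow_succ, mul_add, coeff_add, mul_comm _ (C c), coeff_C_mul, coeff_mul_X']
    have h0 : coeff (Finsupp.single 0 (a+1)) ((X 0 + C c)^a : MvPolynomial (Fin 2) F) = 0 := by
      apply coeff_eq_zero_of_totalDegree_lt
      have h1 : (X 0 + C c : MvPolynomial (Fin 2) F).totalDegree ≤ 1 :=
        le_trans (totalDegree_add _ _) (by simp)
      have h2 : ((X 0 + C c : MvPolynomial (Fin 2) F)^a).totalDegree ≤ a :=
        le_trans (totalDegree_pow _ _) (by nlinarith)
      have h3 : ∑ x ∈ (Finsupp.single (0 : Fin 2) (a+1)).support,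
          (Finsupp.single (0 : Fin 2) (a+1)) x = a + 1 := by
        rw [Finsupp.support_single_ne_zero _ (Nat.succ_ne_zero a)]; simp [-Finsupp.single_add]
      omega
    rw [h0, mul_zero, add_zero]
    have hmem : (0 : Fin 2) ∈ (Finsupp.single (0 : Fin 2) (a+1)).support := by simp
    rw [if_pos hmem]
    have : Finsupp.single (0:Fin 2) (a+1) - Finsupp.single 0 1 = Finsupp.single 0 a := by
      ext j; fin_cases j <;> simp
    rw [this, ih]

private lemma ppc_coeff (F : Type) [Field F] (c m : F) (a b : ℕ) :
    MvPolynomial.coeff (Finsupp.single 0 a + Finsupp.single 1 b)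
      ((X 0 + C c)^a * (C m * X 1)^b : MvPolynomial (Fin 2) F) = m ^ b := by
  rw [mul_pow, ← C_pow, mul_comm (C (m^b)), ← mul_assoc, X_pow_eq_monomial,
    mul_comm _ (C (m^b)), coeff_C_mul, coeff_mul_monomial']
  rw [if_pos le_add_self, add_tsub_cancel_right, ppc_lead]; ring

/-- The diagonal matrix of the permuted product code operator family and its
distance: (a) the coefficient of `X^a Y^b` in `G_i(X^a Y^b)` is `γ^{i·b}`;
(b) if `γ` has multiplicative order at least `k`, then for every nonzero
`u ∈ F_q^w` the number of pairs `(a,b)` with `Σ_i u_i γ^{i·b} = 0` is at most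
`(w-1)·t`; so `Diag(𝓖)` generates a code of minimum distance at least
`tk - (w-1)t`. -/
theorem ppc_diag_matrix_distance
    {F : Type} [Field F] [Fintype F] {pc w t k : ℕ}
    (hchar : CharP F pc) (hpp : pc.Prime)
    (γ : F) (hγ : γ ≠ 0) :
    (∀ a b i : ℕ,
      MvPolynomial.coeff (Finsupp.single 0 a + Finsupp.single 1 b)
        (gOp F γ i (X 0 ^ a * X 1 ^ b)) = γ ^ (i * b)) ∧
    (k ≤ orderOf γ → 1 ≤ w →
      ∀ u : Fin w → F, u ≠ 0 →
        {ab : Fin t × Fin k |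
          (∑ i : Fin w, u i * γ ^ ((i : ℕ) * (ab.2 : ℕ))) = 0}.ncard
          ≤ (w - 1) * t) := by
  constructor
  · intro a b i
    have h1 : gOp F γ i (X 0 ^ a * X 1 ^ b)
        = (X 0 + C ((i : ℕ) : F))^a * (C (γ ^ i) * X 1)^b := by
      simp [gOp, map_mul, map_pow]
    rw [h1, ppc_coeff, ← pow_mul]
  · intro hk hw u hu
    classical
    set P : Polynomial F := ∑ i : Fin w, Polynomial.C (u i) * Polynomial.X ^ (i : ℕ) with hP
    have hcoeff : ∀ i : Fin w, P.coeff i = u i := by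
      intro i
      rw [hP, Polynomial.finset_sum_coeff]
      rw [Finset.sum_eq_single i]
      · simp
      · intro j _ hj
        simp [Polynomial.coeff_C_mul, Polynomial.coeff_X_pow]
        intro h; exact absurd (Fin.ext h.symm) hj
      · simp
    have hPne : P ≠ 0 := by
      intro h
      apply hu
      funext i
      rw [← hcoeff i, h, Polynomial.coeff_zero]; rfl
    have hdeg : P.natDegree ≤ w - 1 := by
      apply Polynomial.natDegree_sum_le_of_forall_le
      intro i _
      refine le_trans (Polynomial.natDegree_C_mul_le _ _) ?_
      simp [Polynomial.natDegree_X_pow]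
      omega
    set S : Finset (Fin k) := {b : Fin k | P.eval (γ ^ (b : ℕ)) = 0} with hS
    have hinj : ∀ b1 b2 : Fin k, γ ^ (b1 : ℕ) = γ ^ (b2 : ℕ) → b1 = b2 := by
      have key : ∀ b1 b2 : Fin k, (b1 : ℕ) ≤ (b2 : ℕ) → γ ^ (b1 : ℕ) = γ ^ (b2 : ℕ) → b1 = b2 := by
        intro b1 b2 hle h
        have h1 : γ ^ ((b2 : ℕ) - b1) * γ ^ (b1 : ℕ) = 1 * γ ^ (b1 : ℕ) := by
          rw [← pow_add, Nat.sub_add_cancel hle, one_mul, h]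
        have h2 : γ ^ ((b2 : ℕ) - b1) = 1 := mul_right_cancel₀ (pow_ne_zero _ hγ) h1
        have h3 := orderOf_dvd_of_pow_eq_one h2
        have h4 : (b2 : ℕ) - b1 < orderOf γ := lt_of_lt_of_le (by omega) hk
        have := Nat.eq_zero_of_dvd_of_lt h3 h4
        · exact Fin.ext (by omega)
      intro b1 b2 h
      rcases le_total (b1 : ℕ) (b2 : ℕ) with hle | hle
      · exact key b1 b2 hle h
      · exact (key b2 b1 hle h.symm).symm
    have hScard : S.card ≤ w - 1 := by
      have h1 : S.card = (S.image (fun b : Fin k => γ ^ (b : ℕ))).card :=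
        (Finset.card_image_of_injOn (fun b1 _ b2 _ h => hinj b1 b2 h)).symm
      rw [h1]
      refine le_trans (Finset.card_le_card ?_) (le_trans (Multiset.toFinset_card_le _) (le_trans (Polynomial.card_roots' P) hdeg))
      intro x hx
      simp only [Finset.mem_image] at hx
      obtain ⟨b, hb, rfl⟩ := hx
      rw [Multiset.mem_toFinset, Polynomial.mem_roots hPne]
      simpa [hS, Polynomial.IsRoot] using hb
    -- now the product set
    have hset : {ab : Fin t × Fin k |
        (∑ i : Fin w, u i * γ ^ ((i : ℕ) * (ab.2 : ℕ))) = 0}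
        = ((Finset.univ : Finset (Fin t)) ×ˢ S : Finset (Fin t × Fin k)) := by
      ext ⟨a, b⟩
      have hc : ∀ x : Fin w, (γ ^ (x:ℕ)) ^ (b:ℕ) = (γ ^ (b:ℕ)) ^ (x:ℕ) := fun x => by
        rw [← pow_mul, ← pow_mul, Nat.mul_comm]
      simp [hS, hP, Polynomial.eval_finset_sum, pow_mul, hc]
    rw [hset, Set.ncard_coe_finset, Finset.card_product, Finset.card_univ, Fintype.card_fin]
    calc t * S.card ≤ t * (w - 1) := Nat.mul_le_mul_left t hScard
      _ = (w - 1) * t := Nat.mul_comm _ _
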